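/- Let n ∈ ℕ, let φ_1, …, φ_n be nondegenerate Orlicz functions, let θ_1, …, θ_n > 0 with ∑_j θ_j = 1, and let φ_z be a nondegenerate Orlicz function satisfying φ_z^{-1}(s) = ∏_{j=1}^n (φ_j^{-1}(s))^{θ_j} for all s ≥ 0. Suppose x, x_1, …, x_n ∈ ℂ^ℕ satisfy |x(k)| = ∏_{j=1}^n |x_j(k)|^{θ_j} for all k, and ∑_k φ_j(|x_j(k)|/2) ≤ 1 for each j = 1, …, n. Then ∑_k φ_z(|x(k)|/2) ≤ n. -/

import Mathlib

open MeasureTheory Real Set Filter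
open scoped ENNReal

noncomputable section

/-- An Orlicz function: convex, nondecreasing and nonnegative on `[0,∞)`, vanishing at
`0` and tending to `∞` at `∞`. -/
def IsOrliczFunction (φ : ℝ → ℝ) : Prop :=
  ConvexOn ℝ (Set.Ici 0) φ ∧ MonotoneOn φ (Set.Ici 0) ∧ φ 0 = 0 ∧
    (∀ t, 0 ≤ t → 0 ≤ φ t) ∧ Filter.Tendsto φ Filter.atTop Filter.atTop

/-- Nondegenerate: positive for positive arguments. -/
def IsNondegenerate (φ : ℝ → ℝ) : Prop := ∀ t, 0 < t → 0 < φ t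

/-- The generalized inverse `φ⁻¹(s) = sup {t ≥ 0 : φ t ≤ s}`. -/
def ginv (φ : ℝ → ℝ) (s : ℝ) : ℝ := sSup {t : ℝ | 0 ≤ t ∧ φ t ≤ s}

lemma ginv_bddAbove (φ : ℝ → ℝ) (h : IsOrliczFunction φ) (s : ℝ) :
    BddAbove {t : ℝ | 0 ≤ t ∧ φ t ≤ s} := by
  obtain ⟨-, -, -, -, htop⟩ := h
  obtain ⟨M, hM⟩ := eventually_atTop.1 (tendsto_atTop.mp htop (s + 1))
  refine ⟨M, fun t ht => ?_⟩
  by_contra h'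
  push_neg at h'
  have := hM t h'.le
  linarith [ht.2]

lemma ginv_nonneg (φ : ℝ → ℝ) (h : IsOrliczFunction φ) {s : ℝ} (hs : 0 ≤ s) :
    0 ≤ ginv φ s :=
  le_csSup (ginv_bddAbove φ h s) ⟨le_refl _, by simp [h.2.2.1, hs]⟩

lemma le_ginv_self (φ : ℝ → ℝ) (h : IsOrliczFunction φ) {t : ℝ} (ht : 0 ≤ t) :
    t ≤ ginv φ (φ t) :=
  le_csSup (ginv_bddAbove φ h _) ⟨ht, le_refl _⟩

lemma ginv_mono (φ : ℝ → ℝ) (h : IsOrliczFunction φ) {s s' : ℝ} (hs : 0 ≤ s)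
    (hss : s ≤ s') : ginv φ s ≤ ginv φ s' :=
  csSup_le_csSup (ginv_bddAbove φ h s') ⟨0, le_refl _, by simp [h.2.2.1, hs]⟩
    (fun t ht => ⟨ht.1, ht.2.trans hss⟩)

lemma apply_ginv_le (φ : ℝ → ℝ) (h : IsOrliczFunction φ) {s : ℝ} (hs : 0 ≤ s) :
    φ (ginv φ s) ≤ s := by
  obtain ⟨hconv, hmono, h0, hnn, htop⟩ := h
  have h0A : (0:ℝ) ∈ {t : ℝ | 0 ≤ t ∧ φ t ≤ s} := ⟨le_refl _, by simp [h0, hs]⟩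
  have hbdd := ginv_bddAbove φ ⟨hconv, hmono, h0, hnn, htop⟩ s
  have hm0 : 0 ≤ ginv φ s := le_csSup hbdd h0A
  set m := ginv φ s with hm
  rcases eq_or_lt_of_le hm0 with he | hl
  · rw [← he, h0]; exact hs
  · have hlt : ∀ t, 0 ≤ t → t < m → φ t ≤ s := by
      intro t ht0 htm
      obtain ⟨t', ht'A, htt'⟩ := exists_lt_of_lt_csSup ⟨0, h0A⟩ htm
      exact le_trans (hmono (Set.mem_Ici.2 ht0) (Set.mem_Ici.2 ht'A.1) htt'.le) ht'A.2
    refine le_of_forall_pos_le_add fun ε hε => ?_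
    set C := φ (m + 1) with hC
    have hC0 : 0 ≤ C := hnn _ (by linarith)
    set δ := min (m/2) (ε/(C+1)) with hδ
    have hδ0 : 0 < δ := lt_min (by linarith) (div_pos hε (by linarith))
    have hδm : δ < m := lt_of_le_of_lt (min_le_left _ _) (by linarith)
    have key : m = (1/(1+δ)) • (m-δ) + (δ/(1+δ)) • (m+1) := by
      simp only [smul_eq_mul]; field_simp; ring
    have hmem1 : (m - δ) ∈ Set.Ici (0:ℝ) := Set.mem_Ici.2 (by linarith)
    have hmem2 : (m + 1) ∈ Set.Ici (0:ℝ) := Set.mem_Ici.2 (by linarith)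
    have hci := hconv.2 hmem1 hmem2 (show (0:ℝ) ≤ 1/(1+δ) by positivity)
      (show (0:ℝ) ≤ δ/(1+δ) by positivity)
      (show 1/(1+δ) + δ/(1+δ) = 1 by field_simp)
    rw [← key] at hci
    simp only [smul_eq_mul] at hci
    have h1 : φ (m - δ) ≤ s := hlt _ (by linarith) (by linarith)
    have hδε : δ ≤ ε/(C+1) := min_le_right _ _
    have h2 : δ/(1+δ) ≤ δ := by
      rw [div_le_iff₀ (by linarith)]; nlinarith
    have h3 : 1/(1+δ) ≤ 1 := by
      rw [div_le_one (by linarith)]; linarith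
    calc φ m ≤ (1/(1+δ)) * φ (m-δ) + (δ/(1+δ)) * C := hci
      _ ≤ 1 * s + δ * C := by
          gcongr
          · exact hnn _ (by linarith)
      _ ≤ s + ε := by
          have : δ * C ≤ ε := by
            calc δ * C ≤ (ε/(C+1)) * C := by gcongr
              _ ≤ ε := by rw [div_mul_eq_mul_div, div_le_iff₀ (by linarith)]; nlinarith
          linarith

/-- Key step of the Lozanovskii-type inclusion: if `φ_z⁻¹ = ∏_j (φ_j⁻¹)^{θ_j}`,
`|x| = ∏_j |x_j|^{θ_j}` pointwise and `∑_k φ_j(|x_j(k)|/2) ≤ 1` for each `j`, then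
`∑_k φ_z(|x(k)|/2) ≤ n`. -/
theorem statement9 (n : ℕ) (hn : 0 < n) (φ : Fin n → ℝ → ℝ)
    (hφ : ∀ j, IsOrliczFunction (φ j) ∧ IsNondegenerate (φ j))
    (θ : Fin n → ℝ) (hθpos : ∀ j, 0 < θ j) (hθsum : ∑ j, θ j = 1)
    (φz : ℝ → ℝ) (hφz : IsOrliczFunction φz ∧ IsNondegenerate φz)
    (hinv : ∀ s : ℝ, 0 ≤ s → ginv φz s = ∏ j, ginv (φ j) s ^ θ j)
    (x : ℕ → ℂ) (xs : Fin n → (ℕ → ℂ))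
    (hfact : ∀ k : ℕ, ‖x k‖ = ∏ j, ‖xs j k‖ ^ θ j)
    (hxs : ∀ j, (∑' k, ENNReal.ofReal (φ j (‖xs j k‖ / 2))) ≤ 1) :
    (∑' k, ENNReal.ofReal (φz (‖x k‖ / 2))) ≤ (n : ℝ≥0∞) := by
  set S : ℕ → ℝ := fun k => ∑ j, φ j (‖xs j k‖ / 2) with hS
  have hterm_nn : ∀ j k, 0 ≤ φ j (‖xs j k‖ / 2) := fun j k =>
    (hφ j).1.2.2.2.1 _ (by positivity)
  have hSnn : ∀ k, 0 ≤ S k := fun k => Finset.sum_nonneg fun j _ => hterm_nn j k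
  -- pointwise bound
  have hpt : ∀ k, φz (‖x k‖ / 2) ≤ S k := by
    intro k
    have hx2 : ‖x k‖ / 2 = ∏ j, (‖xs j k‖ / 2) ^ θ j := by
      have h2 : (2:ℝ) = ∏ j, (2:ℝ) ^ θ j := by
        rw [← Real.rpow_sum_of_pos (by norm_num : (0:ℝ) < 2), hθsum, Real.rpow_one]
      calc ‖x k‖ / 2
          = (∏ j, ‖xs j k‖ ^ θ j) / (∏ j, (2:ℝ) ^ θ j) := by
            rw [← h2, hfact k]
        _ = ∏ j, (‖xs j k‖ / 2) ^ θ j := by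
            rw [← Finset.prod_div_distrib]
            refine Finset.prod_congr rfl fun j _ => ?_
            rw [Real.div_rpow (by positivity) (by norm_num)]
    have hstep : ‖x k‖ / 2 ≤ ginv φz (S k) := by
      rw [hx2, hinv (S k) (hSnn k)]
      refine Finset.prod_le_prod (fun j _ => by positivity) fun j _ => ?_
      refine Real.rpow_le_rpow (by positivity) ?_ (hθpos j).le
      calc ‖xs j k‖ / 2
          ≤ ginv (φ j) (φ j (‖xs j k‖ / 2)) :=
            le_ginv_self (φ j) (hφ j).1 (by positivity)
        _ ≤ ginv (φ j) (S k) := by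
            refine ginv_mono (φ j) (hφ j).1 (hterm_nn j k) ?_
            exact Finset.single_le_sum (fun i _ => hterm_nn i k) (Finset.mem_univ j)
    calc φz (‖x k‖ / 2)
        ≤ φz (ginv φz (S k)) :=
          hφz.1.2.1 (Set.mem_Ici.2 (by positivity))
            (Set.mem_Ici.2 (ginv_nonneg φz hφz.1 (hSnn k))) hstep
      _ ≤ S k := apply_ginv_le φz hφz.1 (hSnn k)
  calc (∑' k, ENNReal.ofReal (φz (‖x k‖ / 2)))
      ≤ ∑' k, ENNReal.ofReal (S k) := ENNReal.tsum_le_tsum fun k =>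
        ENNReal.ofReal_le_ofReal (hpt k)
    _ = ∑' k, ∑ j, ENNReal.ofReal (φ j (‖xs j k‖ / 2)) := by
        refine tsum_congr fun k => ?_
        exact ENNReal.ofReal_sum_of_nonneg fun j _ => hterm_nn j k
    _ = ∑ j, ∑' k, ENNReal.ofReal (φ j (‖xs j k‖ / 2)) := by
        calc (∑' k, ∑ j, ENNReal.ofReal (φ j (‖xs j k‖ / 2)))
            = ∑' k, ∑' j, ENNReal.ofReal (φ j (‖xs j k‖ / 2)) :=
              tsum_congr fun k => (tsum_fintype _).symm
          _ = ∑' (j : Fin n), ∑' k, ENNReal.ofReal (φ j (‖xs j k‖ / 2)) :=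
              ENNReal.tsum_comm
          _ = ∑ j, ∑' k, ENNReal.ofReal (φ j (‖xs j k‖ / 2)) := tsum_fintype _
    _ ≤ ∑ j : Fin n, 1 := Finset.sum_le_sum fun j _ => hxs j
    _ = (n : ℝ≥0∞) := by simp
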